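/- Let R be a ring. Every right R-module is an I_0-module if and only if every simple right R-module is almost projective. -/

import Mathlib

universe u v w

section Defs

variable (A : Type u) [Ring A]

/-- The radical of a module: the intersection of all maximal submodules
(`⊤` if there are none). -/
def modRad (M : Type w) [AddCommGroup M] [Module A M] : Submodule A M :=
  sInf {P : Submodule A M | IsCoatom P}

/-- The socle of a module: the sum of all simple submodules. -/
def modSocle (M : Type w) [AddCommGroup M] [Module A M] : Submodule A M :=
  sSup {S : Submodule A M | IsAtom S}

/-- A submodule `N` of `M` is small if `N ⊔ K = ⊤` implies `K = ⊤`. -/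
def IsSmallSubmodule {M : Type w} [AddCommGroup M] [Module A M] (N : Submodule A M) : Prop :=
  ∀ K : Submodule A M, N ⊔ K = ⊤ → K = ⊤

/-- `N` is a direct summand of `M`. -/
def IsDirectSummand {M : Type w} [AddCommGroup M] [Module A M] (N : Submodule A M) : Prop :=
  ∃ N' : Submodule A M, IsCompl N N'

/-- `N` is an essential submodule of `M`. -/
def IsEssentialSubmodule {M : Type w} [AddCommGroup M] [Module A M] (N : Submodule A M) : Prop :=
  ∀ K : Submodule A M, K ≠ ⊥ → N ⊓ K ≠ ⊥

/-- An `I₀`-module: every non-small submodule contains a nonzero direct summand. -/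
def IsI0Module (M : Type w) [AddCommGroup M] [Module A M] : Prop :=
  ∀ N : Submodule A M, ¬ IsSmallSubmodule A N →
    ∃ D : Submodule A M, D ≠ ⊥ ∧ D ≤ N ∧ IsDirectSummand A D

/-- A `V`-module: every proper submodule is an intersection of maximal submodules. -/
def IsVModule (M : Type w) [AddCommGroup M] [Module A M] : Prop :=
  ∀ N : Submodule A M, N ≠ ⊤ →
    ∃ S : Set (Submodule A M), (∀ P ∈ S, IsCoatom P) ∧ N = sInf S

/-- A local module: it has a proper submodule containing every proper submodule. -/
def IsLocalModule (M : Type w) [AddCommGroup M] [Module A M] : Prop :=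
  ∃ P : Submodule A M, P ≠ ⊤ ∧ ∀ K : Submodule A M, K ≠ ⊤ → K ≤ P

/-- A module of composition length two: it has a submodule which is simultaneously an atom
and a coatom of its submodule lattice, i.e. a composition series `0 ⋖ S ⋖ M`. -/
def HasLengthTwo (M : Type w) [AddCommGroup M] [Module A M] : Prop :=
  ∃ S : Submodule A M, IsAtom S ∧ IsCoatom S

/-- A uniform module: nonzero, and any two nonzero submodules intersect nontrivially. -/
def IsUniformModule (M : Type w) [AddCommGroup M] [Module A M] : Prop :=
  Nontrivial M ∧ ∀ K L : Submodule A M, K ≠ ⊥ → L ≠ ⊥ → K ⊓ L ≠ ⊥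

/-- A uniserial module: submodules are linearly ordered by inclusion. -/
def IsUniserialModule (M : Type w) [AddCommGroup M] [Module A M] : Prop :=
  ∀ K L : Submodule A M, K ≤ L ∨ L ≤ K

/-- A semiartinian module: every nonzero quotient has a nonzero socle. -/
def IsSemiartinianModule (M : Type w) [AddCommGroup M] [Module A M] : Prop :=
  ∀ N : Submodule A M, N ≠ ⊤ → modSocle A (M ⧸ N) ≠ ⊥

/-- `U` is `M`-injective: homomorphisms from submodules of `M` to `U` extend to `M`. -/
def RelInjective (M : Type v) (U : Type w) [AddCommGroup M] [Module A M]
    [AddCommGroup U] [Module A U] : Prop :=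
  ∀ (K : Submodule A M) (f : K →ₗ[A] U), ∃ g : M →ₗ[A] U, ∀ x : K, g (x : M) = f x

/-- `P` is `M`-projective: homomorphisms from `P` to quotients of `M` lift to `M`. -/
def RelProjective (M : Type v) (P : Type w) [AddCommGroup M] [Module A M]
    [AddCommGroup P] [Module A P] : Prop :=
  ∀ (K : Submodule A M) (f : P →ₗ[A] M ⧸ K), ∃ h : P →ₗ[A] M, ∀ x : P, K.mkQ (h x) = f x

/-- `M` is almost `N`-projective. -/
def AlmostNProjective (M : Type v) (N : Type w) [AddCommGroup M] [Module A M]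
    [AddCommGroup N] [Module A N] : Prop :=
  ∀ (K : Submodule A N) (f : M →ₗ[A] N ⧸ K),
    (∃ h : M →ₗ[A] N, ∀ x : M, K.mkQ (h x) = f x) ∨
    (∃ N' : Submodule A N, N' ≠ ⊥ ∧ IsDirectSummand A N' ∧
      ∃ h' : N' →ₗ[A] M, ∀ x : N', K.mkQ (x : N) = f (h' x))

/-- `M` is almost projective: almost `N`-projective for every module `N`. -/
def IsAlmostProjective (M : Type w) [AddCommGroup M] [Module A M] : Prop :=
  ∀ (N : Type v) [AddCommGroup N] [Module A N], AlmostNProjective A M N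

/-- `M` is almost `N`-injective. -/
def AlmostNInjective (M : Type v) (N : Type w) [AddCommGroup M] [Module A M]
    [AddCommGroup N] [Module A N] : Prop :=
  ∀ (N₀ : Submodule A N) (f : N₀ →ₗ[A] M),
    (∃ g : N →ₗ[A] M, ∀ x : N₀, g (x : N) = f x) ∨
    (∃ π : Module.End A N, IsIdempotentElem π ∧ π ≠ 0 ∧
      ∃ h : M →ₗ[A] LinearMap.range π, ∀ x : N₀, (↑(h (f x)) : N) = π (x : N))

/-- `M` is almost injective: almost `N`-injective for every module `N`. -/
def IsAlmostInjective (M : Type w) [AddCommGroup M] [Module A M] : Prop :=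
  ∀ (N : Type v) [AddCommGroup N] [Module A N], AlmostNInjective A M N

/-- `N` belongs to `σ(M)`: `N` is isomorphic to a submodule of a quotient of a direct sum
of copies of `M`. -/
def InSigma (M : Type v) [AddCommGroup M] [Module A M]
    (N : Type w) [AddCommGroup N] [Module A N] : Prop :=
  ∃ (ι : Type v) (K : Submodule A (ι →₀ M)) (P : Submodule A ((ι →₀ M) ⧸ K)),
    Nonempty (N ≃ₗ[A] P)

/-- `P` is a projective object of the category `σ(M)`. -/
def ProjInSigma (M : Type v) [AddCommGroup M] [Module A M]
    (P : Type w) [AddCommGroup P] [Module A P] : Prop :=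
  InSigma A M P ∧
  ∀ (X Y : Type v) [AddCommGroup X] [Module A X] [AddCommGroup Y] [Module A Y],
    InSigma A M X → InSigma A M Y →
    ∀ (g : X →ₗ[A] Y), Function.Surjective g →
    ∀ f : P →ₗ[A] Y, ∃ h : P →ₗ[A] X, ∀ x : P, g (h x) = f x

/-- `M` is an almost `V`-module: every simple module is almost `N`-injective
for every `N ∈ σ(M)`. -/
def IsAlmostVModule (M : Type v) [AddCommGroup M] [Module A M] : Prop :=
  ∀ (S : Type v) [AddCommGroup S] [Module A S], IsSimpleModule A S →
    ∀ (N : Type v) [AddCommGroup N] [Module A N], InSigma A M N → AlmostNInjective A S N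

end Defs

section ProofAux1

variable {A : Type u} [Ring A]

/-- The image of a small submodule under any linear map is small. -/
theorem isSmall_map' {Y Q : Type v} [AddCommGroup Y] [Module A Y] [AddCommGroup Q] [Module A Q]
    {T : Submodule A Y} (hT : IsSmallSubmodule A T) (φ : Y →ₗ[A] Q) :
    IsSmallSubmodule A (T.map φ) := by
  intro W hW
  have h1 : T ⊔ W.comap φ = ⊤ := by
    rw [eq_top_iff]
    rintro y -
    have hy : φ y ∈ T.map φ ⊔ W := by rw [hW]; trivial
    obtain ⟨a, ha, b, hb, hab⟩ := Submodule.mem_sup.1 hy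
    obtain ⟨t, ht, rfl⟩ := ha
    refine Submodule.mem_sup.2 ⟨t, ht, y - t, ?_, by abel⟩
    have : φ (y - t) = b := by rw [map_sub, ← hab]; abel
    exact Submodule.mem_comap.2 (this ▸ hb)
  have h2 : W.comap φ = ⊤ := hT _ h1
  rw [eq_top_iff]
  rintro q -
  have hq : q ∈ T.map φ ⊔ W := by rw [hW]; trivial
  obtain ⟨a, ha, b, hb, hab⟩ := Submodule.mem_sup.1 hq
  obtain ⟨t, -, rfl⟩ := ha
  have hta : φ t ∈ W := by
    have : t ∈ W.comap φ := by rw [h2]; trivial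
    exact this
  rw [← hab]
  exact W.add_mem hta hb

theorem partI
    (hI0 : ∀ (M : Type v) [AddCommGroup M] [Module A M], IsI0Module A M)
    (S : Type v) [AddCommGroup S] [Module A S] (hS : IsSimpleModule A S) :
    IsAlmostProjective.{u, v, v} A S := by
  haveI := hS
  intro Y _ _ K f
  by_cases hr : LinearMap.range f = ⊥
  · left
    refine ⟨0, fun s => ?_⟩
    have h1 : f s ∈ (⊥ : Submodule A (Y ⧸ K)) := hr ▸ LinearMap.mem_range_self f s
    simp only [Submodule.mem_bot] at h1
    simp [h1]
  · have hker : LinearMap.ker f = ⊥ := by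
      rcases eq_bot_or_eq_top (LinearMap.ker f) with h | h
      · exact h
      · exfalso
        apply hr
        rw [eq_bot_iff]
        rintro z ⟨s, rfl⟩
        have : s ∈ LinearMap.ker f := by rw [h]; trivial
        simpa using this
    have hinj : Function.Injective f := LinearMap.ker_eq_bot.mp hker
    set e : S ≃ₗ[A] LinearMap.range f := LinearEquiv.ofInjective f hinj with he
    have hecoe : ∀ s : S, (↑(e s) : Y ⧸ K) = f s := fun s => rfl
    set T : Submodule A Y := (LinearMap.range f).comap K.mkQ with hT
    have hKT : K ≤ T := by
      intro k hk
      rw [hT, Submodule.mem_comap, Submodule.mkQ_apply,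
        (Submodule.Quotient.mk_eq_zero K).2 hk]
      exact Submodule.zero_mem _
    have hmemT : ∀ t : Y, t ∈ T → K.mkQ t ∈ LinearMap.range f := fun t ht => ht
    by_cases hDex : ∃ D : Submodule A Y, D ≠ ⊥ ∧ D ≤ T ∧ IsDirectSummand A D
    · obtain ⟨D, hD0, hDT, hDsum⟩ := hDex
      right
      refine ⟨D, hD0, hDsum, ?_⟩
      have hmem : ∀ x : ↥D, (K.mkQ.comp D.subtype) x ∈ LinearMap.range f := fun x =>
        hmemT _ (hDT x.2)
      refine ⟨(e.symm : ↥(LinearMap.range f) →ₗ[A] S).comp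
        (LinearMap.codRestrict (LinearMap.range f) (K.mkQ.comp D.subtype) hmem), fun x => ?_⟩
      have h1 : ∀ r : ↥(LinearMap.range f), f (e.symm r) = ↑r := fun r => by
        rw [← hecoe, LinearEquiv.apply_symm_apply]
      rw [LinearMap.comp_apply, LinearEquiv.coe_coe, h1]
      rfl
    · have hTsmall : IsSmallSubmodule A T := by
        by_contra hns
        exact hDex (hI0 Y T hns)
      -- the test module Q = Y × S
      set σ : ↥T →ₗ[A] S := (e.symm : ↥(LinearMap.range f) →ₗ[A] S).comp
        (LinearMap.codRestrict (LinearMap.range f) (K.mkQ.comp T.subtype)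
          (fun t => hmemT _ t.2)) with hσ
      have hσval : ∀ t : ↥T, (↑(e (σ t)) : Y ⧸ K) = K.mkQ ↑t := by
        intro t
        rw [hσ, LinearMap.comp_apply, LinearEquiv.coe_coe, LinearEquiv.apply_symm_apply]
        rfl
      have hσ0 : ∀ t : ↥T, (σ t = 0 ↔ (↑t : Y) ∈ K) := by
        intro t
        constructor
        · intro h
          have := hσval t
          rw [h, map_zero] at this
          have h2 : K.mkQ ↑t = 0 := by rw [← this]; rfl
          rwa [Submodule.mkQ_apply, Submodule.Quotient.mk_eq_zero] at h2
        · intro h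
          have h2 : K.mkQ ↑t = 0 := by
            rw [Submodule.mkQ_apply, Submodule.Quotient.mk_eq_zero]; exact h
          have h3 : e (σ t) = 0 := by
            apply Subtype.ext
            rw [hσval t, h2]
            rfl
          have := congrArg e.symm h3
          rwa [LinearEquiv.symm_apply_apply, map_zero] at this
      have hσsurj : Function.Surjective σ := by
        intro s
        obtain ⟨y, hy⟩ := Submodule.mkQ_surjective K (↑(e s) : Y ⧸ K)
        have hyT : y ∈ T := by
          rw [hT, Submodule.mem_comap, hy]
          exact (e s).2
        refine ⟨⟨y, hyT⟩, ?_⟩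
        have h3 : e (σ ⟨y, hyT⟩) = e s := by
          apply Subtype.ext
          rw [hσval ⟨y, hyT⟩, hy]
        have := congrArg e.symm h3
        rwa [LinearEquiv.symm_apply_apply, LinearEquiv.symm_apply_apply] at this
      set g : ↥T →ₗ[A] Y × S := (T.subtype).prod σ with hg
      set G := LinearMap.range g with hG
      set P₁ : Submodule A (Y × S) := (⊤ : Submodule A Y).prod (⊥ : Submodule A S) with hP₁def
      have hsupG : G ⊔ P₁ = ⊤ := by
        rw [eq_top_iff]
        rintro ⟨y, s⟩ -
        obtain ⟨t, ht⟩ := hσsurj s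
        refine Submodule.mem_sup.2 ⟨g t, ⟨t, rfl⟩, (y - ↑t, 0), ⟨trivial, rfl⟩, ?_⟩
        rw [hg]
        show (↑t + (y - ↑t), σ t + 0) = (y, s)
        rw [add_zero, ht]
        congr 1
        abel
      have hP₁top : P₁ ≠ ⊤ := by
        haveI : Nontrivial S := IsSimpleModule.nontrivial A S
        obtain ⟨s₀, hs₀⟩ := exists_ne (0 : S)
        intro h
        have : ((0 : Y), s₀) ∈ P₁ := by rw [h]; trivial
        exact hs₀ this.2
      obtain ⟨D, hD0, hDG, E, hDE⟩ := hI0 (Y × S) G (fun hsm => hP₁top (hsm P₁ hsupG))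
      have hGfst : ∀ d ∈ G, d.1 ∈ T := by rintro d ⟨t, rfl⟩; exact t.2
      have hGfst0 : ∀ d ∈ G, d.1 = (0 : Y) → d = 0 := by
        rintro d ⟨t, rfl⟩ h
        have ht0 : t = 0 := Subtype.ext h
        rw [ht0, map_zero]
      have hGP : ∀ d ∈ G, (d.2 = 0 ↔ d.1 ∈ K) := by
        rintro d ⟨t, rfl⟩
        exact hσ0 t
      by_cases hDP : D ≤ P₁
      · exfalso
        apply hDex
        set π := LinearMap.fst A Y S with hπ
        have hDK : ∀ d ∈ D, d.1 ∈ K := fun d hd => (hGP d (hDG hd)).1 (hDP hd).2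
        refine ⟨D.map π, ?_, ?_, ⟨(E ⊓ P₁).map π, ?_, ?_⟩⟩
        · intro hb
          obtain ⟨d, hd, hdne⟩ := Submodule.exists_mem_ne_zero_of_ne_bot hD0
          have h1 : d.1 = 0 := by
            have : d.1 ∈ D.map π := ⟨d, hd, rfl⟩
            rw [hb] at this
            simpa using this
          have h2 : d.2 = 0 := (hDP hd).2
          exact hdne (Prod.ext h1 h2)
        · rintro z ⟨d, hd, rfl⟩
          exact hKT (hDK d hd)
        · rw [disjoint_iff, eq_bot_iff]
          rintro z ⟨⟨d, hd, hd1⟩, ⟨w, hw, hw1⟩⟩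
          have hdP : d ∈ P₁ := hDP hd
          have hdz : d = (z, 0) := Prod.ext hd1 hdP.2
          have hwz : w = (z, 0) := Prod.ext hw1 hw.2.2
          have : d ∈ D ⊓ E := ⟨hd, by rw [hdz, ← hwz]; exact hw.1⟩
          have hbot : d = 0 := by
            have h5 := hDE.disjoint.le_bot this
            simpa using h5
          rw [Submodule.mem_bot]
          rw [hdz] at hbot
          have := congrArg Prod.fst hbot
          simpa using this
        · rw [codisjoint_iff, ← Submodule.map_sup]
          have h1 : D ⊔ E ⊓ P₁ = P₁ := by
            rw [← sup_inf_assoc_of_le E hDP, hDE.sup_eq_top, top_inf_eq]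
          rw [h1]
          rw [eq_top_iff]
          rintro z -
          exact ⟨(z, 0), ⟨trivial, rfl⟩, rfl⟩
      · by_cases hD0cap : D ⊓ P₁ = ⊥
        · -- branch 1 : lift exists
          left
          set V := D.map (LinearMap.fst A Y S) with hV
          have hVT : V ≤ T := by
            rintro z ⟨d, hd, rfl⟩
            exact hGfst d (hDG hd)
          have hVK : V ⊓ K = ⊥ := by
            rw [eq_bot_iff]
            rintro z ⟨⟨d, hd, rfl⟩, hzK⟩
            have hd2 : d.2 = 0 := (hGP d (hDG hd)).2 hzK
            have : d ∈ D ⊓ P₁ := ⟨hd, ⟨trivial, hd2⟩⟩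
            rw [hD0cap] at this
            rw [Submodule.mem_bot] at this
            simp [this]
          have hV0 : V ≠ ⊥ := by
            intro hb
            obtain ⟨d, hd, hdne⟩ := Submodule.exists_mem_ne_zero_of_ne_bot hD0
            have h1 : d.1 ∈ V := ⟨d, hd, rfl⟩
            rw [hb, Submodule.mem_bot] at h1
            exact hdne (hGfst0 d (hDG hd) h1)
          have hatom : IsAtom (LinearMap.range f) := by
            haveI : IsSimpleModule A ↥(LinearMap.range f) := IsSimpleModule.congr e.symm
            exact isSimpleModule_iff_isAtom.1 this
          have hmapV : Submodule.map K.mkQ V = LinearMap.range f := by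
            have hle1 : Submodule.map K.mkQ V ≤ LinearMap.range f := by
              rintro z ⟨v, hv, rfl⟩
              exact hmemT v (hVT hv)
            rcases lt_or_eq_of_le hle1 with h | h
            · exfalso
              have hb := hatom.2 _ h
              obtain ⟨v, hv, hvne⟩ := Submodule.exists_mem_ne_zero_of_ne_bot hV0
              have : K.mkQ v ∈ Submodule.map K.mkQ V := ⟨v, hv, rfl⟩
              rw [hb, Submodule.mem_bot, Submodule.mkQ_apply,
                Submodule.Quotient.mk_eq_zero] at this
              have : v ∈ V ⊓ K := ⟨hv, this⟩
              rw [hVK] at this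
              exact hvne (by simpa using this)
            · exact h
          have hmemV : ∀ v : ↥V, (K.mkQ.comp V.subtype) v ∈ LinearMap.range f := fun v =>
            hmemT _ (hVT v.2)
          set ψ : ↥V →ₗ[A] S := (e.symm : ↥(LinearMap.range f) →ₗ[A] S).comp
            (LinearMap.codRestrict (LinearMap.range f) (K.mkQ.comp V.subtype) hmemV) with hψ
          have hψval : ∀ v : ↥V, (↑(e (ψ v)) : Y ⧸ K) = K.mkQ ↑v := by
            intro v
            rw [hψ, LinearMap.comp_apply, LinearEquiv.coe_coe, LinearEquiv.apply_symm_apply]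
            rfl
          have hψinj : Function.Injective ψ := by
            intro a b hab
            have h1 : K.mkQ ↑a = K.mkQ ↑b := by
              rw [← hψval a, ← hψval b, hab]
            have h2 : (↑a : Y) - ↑b ∈ K := by
              rw [Submodule.mkQ_apply, Submodule.mkQ_apply] at h1
              exact (Submodule.Quotient.eq K).1 h1
            have h3 : (↑a : Y) - ↑b ∈ V := V.sub_mem a.2 b.2
            have h4 : (↑a : Y) - ↑b ∈ V ⊓ K := ⟨h3, h2⟩
            rw [hVK, Submodule.mem_bot, sub_eq_zero] at h4
            exact Subtype.ext h4
          have hψsurj : Function.Surjective ψ := by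
            intro s
            have : (↑(e s) : Y ⧸ K) ∈ Submodule.map K.mkQ V := by
              rw [hmapV]
              exact (e s).2
            obtain ⟨v, hv, hveq⟩ := this
            refine ⟨⟨v, hv⟩, ?_⟩
            have h3 : e (ψ ⟨v, hv⟩) = e s := by
              apply Subtype.ext
              rw [hψval ⟨v, hv⟩, ← hveq]
            have := congrArg e.symm h3
            rwa [LinearEquiv.symm_apply_apply, LinearEquiv.symm_apply_apply] at this
          set ψ' := LinearEquiv.ofBijective ψ (⟨hψinj, hψsurj⟩ : Function.Bijective ψ) with hψ'
          refine ⟨V.subtype ∘ₗ (ψ'.symm : S →ₗ[A] ↥V), fun s => ?_⟩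
          have h1 : ψ (ψ'.symm s) = s := by
            have := ψ'.apply_symm_apply s
            exact this
          rw [LinearMap.comp_apply]
          have h2 := hψval (ψ'.symm s)
          rw [h1] at h2
          rw [LinearEquiv.coe_coe, Submodule.subtype_apply, ← h2, hecoe]
        · -- contradiction case
          exfalso
          set P₂ := LinearMap.range (LinearMap.inr A Y S) with hP₂
          have hTp : IsSmallSubmodule A (T.map (LinearMap.inl A Y S)) :=
            isSmall_map' hTsmall _
          have hDle : D ≤ T.map (LinearMap.inl A Y S) ⊔ P₂ := by
            intro d hd
            obtain ⟨t, rfl⟩ := hDG hd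
            refine Submodule.mem_sup.2 ⟨((↑t : Y), 0), ⟨↑t, t.2, rfl⟩, (0, σ t), ⟨σ t, rfl⟩, ?_⟩
            show ((↑t : Y) + 0, (0 : S) + σ t) = g t
            rw [add_zero, zero_add]
            rfl
          have hsup2 : T.map (LinearMap.inl A Y S) ⊔ (P₂ ⊔ E) = ⊤ := by
            rw [eq_top_iff, ← hDE.sup_eq_top]
            refine sup_le ?_ ?_
            · exact hDle.trans (sup_le_sup_left le_sup_left _)
            · exact le_sup_right.trans le_sup_right
          have hPE : P₂ ⊔ E = ⊤ := hTp _ hsup2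
          haveI hP₂simple : IsSimpleModule A ↥P₂ :=
            IsSimpleModule.congr (LinearEquiv.ofInjective (LinearMap.inr A Y S)
              LinearMap.inr_injective).symm
          by_cases hP₂E : P₂ ≤ E
          · have hEtop : E = ⊤ := top_unique (by rw [← hPE]; exact sup_le hP₂E le_rfl)
            apply hD0
            have := hDE.disjoint
            rw [hEtop, disjoint_top] at this
            exact this
          · have hP₂E0 : P₂ ⊓ E = ⊥ := by
              have hatom₂ : IsAtom P₂ := isSimpleModule_iff_isAtom.1 hP₂simple
              rcases lt_or_eq_of_le (inf_le_left : P₂ ⊓ E ≤ P₂) with h | h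
              · exact hatom₂.2 _ h
              · exact absurd (inf_eq_left.1 h) hP₂E
            have hcompl2 : IsCompl P₂ E := ⟨disjoint_iff.2 hP₂E0, codisjoint_iff.2 hPE⟩
            haveI hDsimple : IsSimpleModule A ↥D := by
              have e1 := Submodule.quotientEquivOfIsCompl E D hDE.symm
              have e2 := Submodule.quotientEquivOfIsCompl E P₂ hcompl2.symm
              exact IsSimpleModule.congr (e1.symm.trans e2)
            have hatomD : IsAtom D := isSimpleModule_iff_isAtom.1 hDsimple
            have hlt : D ⊓ P₁ < D := lt_of_le_of_ne inf_le_left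
              (fun h => hDP (inf_eq_left.1 h))
            exact hD0cap (hatomD.2 _ hlt)

end ProofAux1

section ProofAux

variable {A : Type u} [Ring A]

/-- The key splitting lemma: if every simple module is almost projective and `N ≤ M`
contains no nonzero direct summand of `M`, then every covering pair `K < T` inside `N`
splits: there is an atom `V` with `V ⊓ K = ⊥` and `V ⊔ K = T`. -/
theorem almostProj_split
    (hyp : ∀ (S : Type v) [AddCommGroup S] [Module A S],
      IsSimpleModule A S → IsAlmostProjective.{u, v, v} A S)
    {M : Type v} [AddCommGroup M] [Module A M] {N : Submodule A M}
    (h₀ : ∀ D : Submodule A M, D ≠ ⊥ → D ≤ N → ¬ IsDirectSummand A D)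
    (K T : Submodule A M) (hKT : K < T) (hTN : T ≤ N)
    (hcov : ∀ X : Submodule A M, K < X → X ≤ T → X = T) :
    ∃ V : Submodule A M, IsAtom V ∧ V ≤ T ∧ V ⊓ K = ⊥ ∧ V ⊔ K = T := by
  have hcb : K ⋖ T := ⟨hKT, fun X h1 h2 => absurd (hcov X h1 h2.le) h2.ne⟩
  have hsimp : IsSimpleModule A (↥T ⧸ Submodule.comap T.subtype K) :=
    (covBy_iff_quot_is_simple hKT.le).1 hcb
  set K' := Submodule.comap T.subtype K with hK'
  have hle : K' ≤ LinearMap.ker (K.mkQ ∘ₗ T.subtype) := by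
    intro t ht
    simp only [LinearMap.mem_ker, LinearMap.comp_apply, Submodule.subtype_apply,
      Submodule.mkQ_apply]
    exact (Submodule.Quotient.mk_eq_zero K).2 ht
  set f : (↥T ⧸ K') →ₗ[A] M ⧸ K := Submodule.liftQ K' (K.mkQ ∘ₗ T.subtype) hle with hf
  have hfmk : ∀ t : ↥T, f (Submodule.Quotient.mk t) = K.mkQ ↑t := fun t => rfl
  have hfinj : Function.Injective f := by
    rw [← LinearMap.ker_eq_bot]
    apply Submodule.ker_liftQ_eq_bot
    intro t ht
    simp only [LinearMap.mem_ker, LinearMap.comp_apply, Submodule.subtype_apply,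
      Submodule.mkQ_apply] at ht
    exact (Submodule.Quotient.mk_eq_zero K).1 ht
  obtain h1 | h2 := hyp (↥T ⧸ K') hsimp M K f
  · obtain ⟨h, hh⟩ := h1
    set V := LinearMap.range h with hV
    have hVT : V ≤ T := by
      rintro x ⟨s, rfl⟩
      obtain ⟨t, rfl⟩ := Submodule.Quotient.mk_surjective K' s
      have h1 : K.mkQ (h (Submodule.Quotient.mk t)) = K.mkQ ↑t := by
        rw [hh, hfmk]
      have h2 : h (Submodule.Quotient.mk t) - ↑t ∈ K := by
        rwa [Submodule.mkQ_apply, Submodule.mkQ_apply, Submodule.Quotient.eq] at h1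
      have h3 : h (Submodule.Quotient.mk t) = (h (Submodule.Quotient.mk t) - ↑t) + ↑t := by
        abel
      rw [h3]
      exact T.add_mem (hKT.le h2) t.2
    have hVK : V ⊓ K = ⊥ := by
      rw [eq_bot_iff]
      rintro x ⟨⟨s, rfl⟩, hxK⟩
      have : f s = 0 := by
        rw [← hh, Submodule.mkQ_apply]
        exact (Submodule.Quotient.mk_eq_zero K).2 hxK
      have hs0 : s = 0 := hfinj (by rw [this, map_zero])
      simp [hs0]
    have hinj_h : Function.Injective h := by
      intro a b hab
      exact hfinj (by rw [← hh, ← hh, hab])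
    have hV0 : V ≠ ⊥ := by
      intro hb
      obtain ⟨t, htT, htK⟩ := SetLike.exists_of_lt hKT
      have hs0 : (Submodule.Quotient.mk (⟨t, htT⟩ : ↥T) : ↥T ⧸ K') ≠ 0 := by
        rw [Ne, Submodule.Quotient.mk_eq_zero]
        exact htK
      apply hs0
      apply hinj_h
      rw [map_zero]
      have : h (Submodule.Quotient.mk (⟨t, htT⟩ : ↥T)) ∈ V := ⟨_, rfl⟩
      rw [hb] at this
      exact this
    have hatomV : IsAtom V := by
      haveI := hsimp
      exact isSimpleModule_iff_isAtom.1
        (IsSimpleModule.congr (LinearEquiv.ofInjective h hinj_h).symm)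
    refine ⟨V, hatomV, hVT, hVK, ?_⟩
    have hKlt : K < V ⊔ K := by
      refine lt_of_le_of_ne le_sup_right fun h => ?_
      have hVle : V ≤ K := by rw [h]; exact le_sup_left
      exact hV0 (by rw [← hVK, inf_eq_left.2 hVle])
    exact hcov _ hKlt (sup_le hVT hKT.le)
  · obtain ⟨N', hN'0, hN'sum, h', hh'⟩ := h2
    exfalso
    refine h₀ N' hN'0 ?_ hN'sum
    refine le_trans ?_ hTN
    intro x hx
    have heq := hh' ⟨x, hx⟩
    obtain ⟨t, ht⟩ := Submodule.Quotient.mk_surjective K' (h' ⟨x, hx⟩)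
    rw [← ht, hfmk] at heq
    have hx2 : x - ↑t ∈ K := by
      rw [Submodule.mkQ_apply] at heq
      exact (Submodule.Quotient.eq K).1 heq
    have h3 : x = (x - ↑t) + ↑t := by abel
    rw [h3]
    exact T.add_mem (hKT.le hx2) t.2

end ProofAux
section ProofAux2

variable {A : Type u} [Ring A]

theorem partII
    (hyp : ∀ (S : Type v) [AddCommGroup S] [Module A S],
      IsSimpleModule A S → IsAlmostProjective.{u, v, v} A S)
    (M : Type v) [AddCommGroup M] [Module A M] : IsI0Module A M := by
  intro N hNS
  by_contra hno
  push_neg at hno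
  have h₀ : ∀ D : Submodule A M, D ≠ ⊥ → D ≤ N → ¬ IsDirectSummand A D := fun D h1 h2 =>
    hno D h1 h2
  have key := almostProj_split hyp h₀
  -- N is not small : get K₀
  have hexK₀ : ∃ K₀ : Submodule A M, N ⊔ K₀ = ⊤ ∧ K₀ ≠ ⊤ := by
    unfold IsSmallSubmodule at hNS
    push_neg at hNS
    exact hNS
  obtain ⟨K₀, hK₀sup, hK₀top⟩ := hexK₀
  have hNK₀ : ¬ N ≤ K₀ := fun h => hK₀top (by rw [← hK₀sup, sup_eq_right.2 h])
  obtain ⟨x, hxN, hxK₀⟩ := SetLike.not_le_iff_exists.1 hNK₀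
  -- Zorn to get L' maximal among submodules of N containing N ⊓ K₀ avoiding x
  have hZ1 : ∃ L', (N ⊓ K₀) ≤ L' ∧ Maximal (· ∈ {L : Submodule A M | N ⊓ K₀ ≤ L ∧ L ≤ N ∧ x ∉ L}) L' := by
    apply zorn_le_nonempty₀
    · intro c hsub hchain y hy
      refine ⟨sSup c, ⟨?_, ?_, ?_⟩, fun z hz => le_sSup hz⟩
      · exact (hsub hy).1.trans (le_sSup hy)
      · exact sSup_le fun z hz => (hsub hz).2.1
      · intro hxs
        rw [Submodule.mem_sSup_of_directed ⟨y, hy⟩ hchain.directedOn] at hxs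
        obtain ⟨z, hz, hxz⟩ := hxs
        exact (hsub hz).2.2 hxz
    · exact ⟨le_rfl, inf_le_left, fun h => hxK₀ h.2⟩
  obtain ⟨L', -, hL'max⟩ := hZ1
  obtain ⟨hL'1, hL'2, hL'3⟩ := hL'max.prop
  set T₄ := L' ⊔ Submodule.span A {x} with hT₄
  have hT₄N : T₄ ≤ N := sup_le hL'2 ((Submodule.span_le).2 (Set.singleton_subset_iff.2 hxN))
  have hxT₄ : x ∈ T₄ := Submodule.mem_sup_right (Submodule.mem_span_singleton_self x)
  have hL'T₄ : L' < T₄ := lt_of_le_of_ne le_sup_left (fun h => hL'3 (h ▸ hxT₄))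
  have hcov₄ : ∀ X : Submodule A M, L' < X → X ≤ T₄ → X = T₄ := by
    intro X h1 h2
    have hX : X ∉ {L : Submodule A M | N ⊓ K₀ ≤ L ∧ L ≤ N ∧ x ∉ L} := by
      intro hmem
      exact h1.not_ge (hL'max.2 hmem h1.le)
    have hxX : x ∈ X := by
      by_contra hx'
      exact hX ⟨hL'1.trans h1.le, h2.trans hT₄N, hx'⟩
    exact le_antisymm h2 (sup_le h1.le ((Submodule.span_le).2 (Set.singleton_subset_iff.2 hxX)))
  obtain ⟨U, hUatom, hUT₄, hUL', hUsup⟩ := key L' T₄ hL'T₄ hT₄N hcov₄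
  have hUN : U ≤ N := hUT₄.trans hT₄N
  have hU0 : U ≠ ⊥ := hUatom.1
  have hUK₀ : U ⊓ K₀ = ⊥ := by
    rw [eq_bot_iff, ← hUL']
    exact le_inf inf_le_left ((le_inf (inf_le_left.trans hUN) inf_le_right).trans hL'1)
  -- Zorn to get C maximal with K₀ ≤ C, C ⊓ U = ⊥
  have hZ2 : ∃ C, K₀ ≤ C ∧ Maximal (· ∈ {C : Submodule A M | K₀ ≤ C ∧ C ⊓ U = ⊥}) C := by
    apply zorn_le_nonempty₀
    · intro c hsub hchain y hy
      refine ⟨sSup c, ⟨(hsub hy).1.trans (le_sSup hy), ?_⟩, fun z hz => le_sSup hz⟩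
      rw [eq_bot_iff]
      rintro w ⟨hw1, hw2⟩
      rw [SetLike.mem_coe, Submodule.mem_sSup_of_directed ⟨y, hy⟩ hchain.directedOn] at hw1
      obtain ⟨z, hz, hwz⟩ := hw1
      exact (eq_bot_iff.1 (hsub hz).2) ⟨hwz, hw2⟩
    · exact ⟨le_rfl, by rw [inf_comm]; exact hUK₀⟩
  obtain ⟨C, hK₀C, hCmax⟩ := hZ2
  obtain ⟨hC1, hC2⟩ := hCmax.prop
  -- main claim U ⊔ C = ⊤
  have hUC : U ⊔ C = ⊤ := by
    by_contra hUCtop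
    have : ¬ (⊤ : Submodule A M) ≤ U ⊔ C := fun h => hUCtop (top_unique h)
    obtain ⟨y, -, hyUC⟩ := SetLike.not_le_iff_exists.1 this
    set Tt := C ⊔ Submodule.span A {y} with hTt
    -- Zorn: Kt max in {L | C ≤ L ≤ Tt, y ∉ L}
    have hZ3 : ∃ Kt, C ≤ Kt ∧ Maximal (· ∈ {L : Submodule A M | C ≤ L ∧ L ≤ Tt ∧ y ∉ L}) Kt := by
      apply zorn_le_nonempty₀
      · intro c hsub hchain w hw
        refine ⟨sSup c, ⟨(hsub hw).1.trans (le_sSup hw), sSup_le fun z hz => (hsub hz).2.1, ?_⟩,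
          fun z hz => le_sSup hz⟩
        intro hys
        rw [Submodule.mem_sSup_of_directed ⟨w, hw⟩ hchain.directedOn] at hys
        obtain ⟨z, hz, hyz⟩ := hys
        exact (hsub hz).2.2 hyz
      · exact ⟨le_rfl, le_sup_left, fun h => hyUC (Submodule.mem_sup_right h)⟩
    obtain ⟨Kt, hCKt, hKtmax⟩ := hZ3
    obtain ⟨hKt1, hKt2, hKt3⟩ := hKtmax.prop
    have hyTt : y ∈ Tt := Submodule.mem_sup_right (Submodule.mem_span_singleton_self y)
    have hKtTt : Kt < Tt := lt_of_le_of_ne hKt2 (fun h => hKt3 (h ▸ hyTt))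
    have hcovKt : ∀ X : Submodule A M, Kt < X → X ≤ Tt → X = Tt := by
      intro X h1 h2
      have hyX : y ∈ X := by
        by_contra hy'
        exact h1.not_ge (hKtmax.2 ⟨hKt1.trans h1.le, h2, hy'⟩ h1.le)
      exact le_antisymm h2 (sup_le (hKt1.trans h1.le)
        ((Submodule.span_le).2 (Set.singleton_subset_iff.2 hyX)))
    have hNKttop : N ⊔ Kt = ⊤ := by
      rw [eq_top_iff, ← hK₀sup]
      exact sup_le_sup_left (hK₀C.trans hKt1) N
    set K1 := Kt ⊓ N with hK1
    set T1 := Tt ⊓ N with hT1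
    have hmod1 : T1 ⊔ Kt = Tt := by
      have := sup_inf_assoc_of_le N (hKtTt.le : Kt ≤ Tt)
      -- (Kt ⊔ N) ⊓ Tt = Kt ⊔ (N ⊓ Tt)
      rw [sup_comm Kt N, hNKttop, top_inf_eq] at this
      rw [sup_comm, hT1, inf_comm Tt N]
      exact this.symm
    have hK1T1 : K1 < T1 := by
      refine lt_of_le_of_ne (inf_le_inf_right _ hKtTt.le) (fun h => ?_)
      apply hKtTt.ne
      have h2 : Kt = Kt ⊔ T1 := by
        rw [← h]
        exact (sup_eq_left.2 inf_le_left).symm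
      rw [h2, sup_comm, hmod1]
    have hcov1 : ∀ X : Submodule A M, K1 < X → X ≤ T1 → X = T1 := by
      intro X h1 h2
      have hXN : X ≤ N := h2.trans inf_le_right
      have hXKt : ¬ X ≤ Kt := fun h => h1.not_ge (le_inf h hXN)
      have hKtlt : Kt < Kt ⊔ X := lt_of_le_of_ne le_sup_left
        (fun h => hXKt (by rw [h]; exact le_sup_right))
      have h3 : Kt ⊔ X = Tt := hcovKt _ hKtlt (sup_le hKtTt.le (h2.trans inf_le_left))
      calc X = X ⊔ K1 := (sup_eq_left.2 h1.le).symm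
        _ = (X ⊔ Kt) ⊓ N := by rw [hK1, ← sup_inf_assoc_of_le _ hXN]
        _ = Tt ⊓ N := by rw [sup_comm, h3]
        _ = T1 := rfl
    obtain ⟨V, hVatom, hVT1, hVK1, hVsup⟩ := key K1 T1 hK1T1 inf_le_right hcov1
    have hVN : V ≤ N := hVT1.trans inf_le_right
    have hVC : V ⊓ C = ⊥ := by
      rw [eq_bot_iff, ← hVK1]
      exact le_inf inf_le_left (le_inf (inf_le_right.trans hKt1) (inf_le_left.trans hVN))
    -- U ≤ C ⊔ V
    have hCV : C < C ⊔ V := lt_of_le_of_ne le_sup_left (fun h => hVatom.1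
      (by rw [← hVC, inf_eq_left.2 (by rw [h]; exact le_sup_right : V ≤ C)]))
    have atom_arg : ∀ W : Submodule A M, K₀ ≤ W → C < W → U ≤ W := by
      intro W hK₀W hCW
      have h1 : W ∉ {C : Submodule A M | K₀ ≤ C ∧ C ⊓ U = ⊥} := by
        intro hmem
        exact hCW.not_ge (hCmax.2 hmem hCW.le)
      have h2 : W ⊓ U ≠ ⊥ := fun hb => h1 ⟨hK₀W, hb⟩
      rcases lt_or_eq_of_le (inf_le_right : W ⊓ U ≤ U) with h | h
      · exact absurd (hUatom.2 _ h) h2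
      · rw [← h]; exact inf_le_left
    have hU_CV : U ≤ C ⊔ V := atom_arg _ (hK₀C.trans le_sup_left) hCV
    -- C ⊔ U = C ⊔ V
    have hCU_CV : C ⊔ U = C ⊔ V := by
      have hCltCU : C < C ⊔ U := lt_of_le_of_ne le_sup_left (fun h => hU0 (by
        have hUC' : U ≤ C := by rw [h]; exact le_sup_right
        exact (inf_eq_right.2 hUC').symm.trans hC2))
      have hle : C ⊔ U ≤ C ⊔ V := sup_le le_sup_left hU_CV
      rcases lt_or_eq_of_le (inf_le_right : (C ⊔ U) ⊓ V ≤ V) with h | h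
      · exfalso
        have hVbot := hVatom.2 _ h
        apply hCltCU.ne
        have hmod := sup_inf_assoc_of_le V (le_sup_left : C ≤ C ⊔ U)
        -- (C ⊔ V) ⊓ (C ⊔ U) = C ⊔ (V ⊓ (C ⊔ U))
        rw [inf_comm V (C ⊔ U)] at hmod
        rw [inf_eq_right.2 hle] at hmod
        rw [hVbot, sup_bot_eq] at hmod
        exact hmod.symm
      · exact le_antisymm hle (sup_le le_sup_left (by rw [← h]; exact inf_le_left))
    have hTtVKt : Tt = V ⊔ Kt := by
      rw [← hmod1, ← hVsup, sup_assoc, sup_eq_right.2 (inf_le_left : K1 ≤ Kt)]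
    by_cases hKtC : Kt = C
    · apply hyUC
      have hTle : Tt ≤ U ⊔ C := by
        rw [hTtVKt, hKtC]
        have hV_CU : V ≤ C ⊔ U := by rw [hCU_CV]; exact le_sup_right
        exact sup_le (hV_CU.trans (by rw [sup_comm])) le_sup_right
      exact hTle hyTt
    · have hCltKt : C < Kt := lt_of_le_of_ne hKt1 (Ne.symm hKtC)
      have hU_Kt : U ≤ Kt := atom_arg _ (hK₀C.trans hCltKt.le) hCltKt
      have hTle : Tt ≤ Kt := by
        rw [hTtVKt]
        refine sup_le ?_ le_rfl
        have hV_CU : V ≤ C ⊔ U := by rw [hCU_CV]; exact le_sup_right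
        exact hV_CU.trans (sup_le hCltKt.le hU_Kt)
      exact hKt3 (hTle hyTt)
  exact h₀ U hU0 hUN ⟨C, ⟨disjoint_iff.2 (by rw [inf_comm]; exact hC2),
    codisjoint_iff.2 hUC⟩⟩

end ProofAux2

/-- Corollary 1.2: every right `R`-module is an `I₀`-module iff every simple right
`R`-module is almost projective. -/
theorem every_module_I0_iff_every_simple_almostProjective (R : Type u) [Ring R] :
    (∀ (M : Type v) [AddCommGroup M] [Module Rᵐᵒᵖ M], IsI0Module Rᵐᵒᵖ M) ↔
    (∀ (S : Type v) [AddCommGroup S] [Module Rᵐᵒᵖ S],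
      IsSimpleModule Rᵐᵒᵖ S → IsAlmostProjective.{u, v, v} Rᵐᵒᵖ S) := by
  constructor
  · intro hI0 S _ _ hS
    exact partI hI0 S hS
  · intro hyp M _ _
    exact partII hyp M
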